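/- With A(n;m) = ∑_{k=0}^∞ (1/2)_m (1/2)_{n−m} ((1/2)_k)²/(n!·(m+1/2)_{k+1}·(n−m+1/2)_{k+1}), the recursion m²·A(n+1;m) − (m−1/2)²·A(n;m−1) = −(1/2)_{n+1−m}·(1/2)_m/(n+1)! holds for 1 ≤ m ≤ n+1. -/

import Mathlib

/-- Pochhammer symbol (rising factorial) `(x)_n`. -/
noncomputable def poch (x : ℝ) (n : ℕ) : ℝ := (ascPochhammer ℝ n).eval x

/-- `A(n;m)` from the expansion of Ausserlechner's integral. -/
noncomputable def A (n m : ℕ) : ℝ :=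
  ∑' k : ℕ, poch (1/2) m * poch (1/2) (n - m) * (poch (1/2) k) ^ 2 /
    (n.factorial * poch ((m : ℝ) + 1/2) (k + 1) * poch ((n - m : ℕ) + 1/2) (k + 1))

lemma poch_zero (x : ℝ) : poch x 0 = 1 := by simp [poch]

lemma poch_succ (x : ℝ) (k : ℕ) : poch x (k+1) = poch x k * (x + k) := by
  simp [poch, ascPochhammer_succ_right]

lemma poch_succ' (x : ℝ) (k : ℕ) : poch x (k+1) = x * poch (x+1) k := by
  simp [poch, ascPochhammer_succ_left, Polynomial.eval_comp]

lemma poch_pos {x : ℝ} (hx : 0 < x) (k : ℕ) : 0 < poch x k := by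
  induction k with
  | zero => simp [poch_zero]
  | succ k ih => rw [poch_succ]; positivity

lemma poch_le {x y : ℝ} (hx : 0 < x) (hxy : x ≤ y) (k : ℕ) : poch x k ≤ poch y k := by
  induction k with
  | zero => simp [poch_zero]
  | succ k ih =>
    rw [poch_succ, poch_succ]
    have := poch_pos hx k
    have : (0:ℝ) < x + k := by positivity
    have hy := poch_pos (lt_of_lt_of_le hx hxy) k
    gcongr

lemma poch_three_halves (k : ℕ) : poch (3/2) k = 2 * poch (1/2) k * (1/2 + k) := by
  have h1 := poch_succ (1/2 : ℝ) k
  have h2 := poch_succ' (1/2 : ℝ) k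
  norm_num at h2
  nlinarith [h1, h2]

/-- Summability of the core series. -/
lemma summable_core {c d : ℝ} (hc : (1/2:ℝ) ≤ c) (hd : (1/2:ℝ) ≤ d) :
    Summable (fun k : ℕ => poch (1/2) k ^ 2 / (poch c (k+1) * poch d (k+1))) := by
  have h2 : (0:ℝ) < 1/2 := by norm_num
  have hs : Summable (fun k : ℕ => 4 / ((k:ℝ)+1) ^ 2) := by
    have h0 : Summable (fun n : ℕ => 1 / (n:ℝ) ^ 2) :=
      Real.summable_one_div_nat_pow.mpr (by norm_num)
    have h1 : Summable (fun n : ℕ => 1 / ((n:ℝ)+1) ^ 2) := by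
      have := (summable_nat_add_iff (f := fun n : ℕ => 1 / (n:ℝ) ^ 2) 1).2 h0
      refine this.congr fun n => by push_cast; ring
    exact (h1.mul_left 4).congr fun n => by ring
  refine Summable.of_nonneg_of_le (fun k => ?_) (fun k => ?_) hs
  · have := poch_pos h2 k
    have hcp := poch_pos (lt_of_lt_of_le h2 hc) (k+1)
    have hdp := poch_pos (lt_of_lt_of_le h2 hd) (k+1)
    positivity
  · have hpk := poch_pos h2 k
    have hpk1 := poch_pos h2 (k+1)
    have hcp := poch_pos (lt_of_lt_of_le h2 hc) (k+1)
    have hdp := poch_pos (lt_of_lt_of_le h2 hd) (k+1)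
    have hle1 := poch_le h2 hc (k+1)
    have hle2 := poch_le h2 hd (k+1)
    have step1 : poch (1/2) k ^ 2 / (poch c (k+1) * poch d (k+1)) ≤
        poch (1/2) k ^ 2 / (poch (1/2) (k+1) * poch (1/2) (k+1)) := by
      apply div_le_div_of_nonneg_left (by positivity) (by positivity)
      exact mul_le_mul hle1 hle2 (le_of_lt hpk1) (le_of_lt (lt_of_lt_of_le hpk1 hle1))
    refine le_trans step1 ?_
    rw [poch_succ]
    have hk : (0:ℝ) < 1/2 + k := by positivity
    have : poch (1/2) k ^ 2 / (poch (1/2) k * (1/2 + (k:ℝ)) * (poch (1/2) k * (1/2 + k)))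
        = 1 / (1/2 + (k:ℝ)) ^ 2 := by
      field_simp
    rw [this]
    rw [div_le_div_iff₀ (by positivity) (by positivity)]
    nlinarith [sq_nonneg ((k:ℝ))]

/-- The telescoping function. -/
noncomputable def gfun (m' j : ℕ) (k : ℕ) : ℝ :=
  poch (1/2) (m'+1) * poch (1/2) j / ((m'+j+1).factorial : ℝ) *
    (poch (1/2) k ^ 2 / (poch ((m':ℝ) + 1 + 1/2) k * poch ((j:ℝ) + 1/2) k))

/-- First series term: for `A (m'+j+1) (m'+1)`. -/
noncomputable def t1 (m' j : ℕ) (k : ℕ) : ℝ :=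
  poch (1/2) (m'+1) * poch (1/2) j * poch (1/2) k ^ 2 /
    (((m'+j+1).factorial : ℝ) * poch ((m':ℝ) + 1 + 1/2) (k+1) * poch ((j:ℝ) + 1/2) (k+1))

/-- Second series term: for `A (m'+j) m'`. -/
noncomputable def t2 (m' j : ℕ) (k : ℕ) : ℝ :=
  poch (1/2) m' * poch (1/2) j * poch (1/2) k ^ 2 /
    (((m'+j).factorial : ℝ) * poch ((m':ℝ) + 1/2) (k+1) * poch ((j:ℝ) + 1/2) (k+1))

set_option maxHeartbeats 1600000 in
lemma key (m' j k : ℕ) :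
    ((m':ℝ)+1) ^ 2 * t1 m' j k - ((m':ℝ)+1 - 1/2) ^ 2 * t2 m' j k =
      gfun m' j (k+1) - gfun m' j k := by
  have h2 : (0:ℝ) < 1/2 := by norm_num
  have hc1 : (0:ℝ) < (m':ℝ) + 1 + 1/2 := by positivity
  have hc2 : (0:ℝ) < (m':ℝ) + 1/2 := by positivity
  have hd : (0:ℝ) < (j:ℝ) + 1/2 := by positivity
  have hpk := poch_pos h2 k
  have hpc1 := poch_pos hc1 k
  have hpd := poch_pos hd k
  have hfp : (0:ℝ) < ((m'+j).factorial : ℝ) := by exact_mod_cast (m'+j).factorial_pos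
  have e1 : poch ((m':ℝ) + 1 + 1/2) (k+1) = poch ((m':ℝ) + 1 + 1/2) k * ((m':ℝ) + 1 + 1/2 + k) :=
    poch_succ _ k
  have e2 : poch ((m':ℝ) + 1/2) (k+1) = ((m':ℝ) + 1/2) * poch ((m':ℝ) + 1 + 1/2) k := by
    rw [poch_succ']; ring_nf
  have e3 : poch ((j:ℝ) + 1/2) (k+1) = poch ((j:ℝ) + 1/2) k * ((j:ℝ) + 1/2 + k) :=
    poch_succ _ k
  have e4 : poch (1/2) (m'+1) = poch (1/2) m' * (1/2 + m') := poch_succ _ m'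
  have e5 : poch (1/2) (k+1) = poch (1/2) k * (1/2 + k) := poch_succ _ k
  have e6 : ((m'+j+1).factorial : ℝ) = ((m':ℝ) + j + 1) * ((m'+j).factorial : ℝ) := by
    rw [Nat.factorial_succ]; push_cast; ring
  unfold t1 t2 gfun
  rw [e1, e2, e3, e4, e5, e6]
  have hck : (0:ℝ) < ((m':ℝ) + 1 + 1/2 + k) := by positivity
  have hdk : (0:ℝ) < ((j:ℝ) + 1/2 + k) := by positivity
  have hmj : (0:ℝ) < ((m':ℝ) + j + 1) := by positivity
  simp only [div_mul_div_comm]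
  simp only [← mul_div_assoc]
  rw [div_sub_div _ _ (by positivity) (by positivity),
    div_sub_div _ _ (by positivity) (by positivity), div_eq_div_iff (by positivity) (by positivity)]
  ring

lemma tendsto_gfun (m' j : ℕ) : Filter.Tendsto (gfun m' j) Filter.atTop (nhds 0) := by
  have h2 : (0:ℝ) < 1/2 := by norm_num
  have hc1 : (0:ℝ) < (m':ℝ) + 1 + 1/2 := by positivity
  have hd : (0:ℝ) < (j:ℝ) + 1/2 := by positivity
  set D : ℝ := poch (1/2) (m'+1) * poch (1/2) j / ((m'+j+1).factorial : ℝ) with hD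
  have hD0 : 0 ≤ D := by
    have := poch_pos h2 (m'+1)
    have := poch_pos h2 j
    have : (0:ℝ) < ((m'+j+1).factorial : ℝ) := by positivity
    positivity
  have hbound : ∀ k : ℕ, gfun m' j k ≤ D * (1 / ((k:ℝ)+1)) := by
    intro k
    have hpk := poch_pos h2 k
    have hpc1 := poch_pos hc1 k
    have hpd := poch_pos hd k
    have h32 : poch (3/2) k ≤ poch ((m':ℝ) + 1 + 1/2) k :=
      poch_le (by norm_num) (by push_cast; linarith [Nat.cast_nonneg (α := ℝ) m']) k
    have hhd : poch (1/2) k ≤ poch ((j:ℝ) + 1/2) k :=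
      poch_le h2 (by linarith [Nat.cast_nonneg (α := ℝ) j]) k
    have hcore : poch (1/2) k ^ 2 / (poch ((m':ℝ) + 1 + 1/2) k * poch ((j:ℝ) + 1/2) k)
        ≤ 1 / ((k:ℝ)+1) := by
      have h32p : (0:ℝ) < poch (3/2) k := poch_pos (by norm_num) k
      have step : poch (1/2) k ^ 2 / (poch ((m':ℝ) + 1 + 1/2) k * poch ((j:ℝ) + 1/2) k)
          ≤ poch (1/2) k ^ 2 / (poch (3/2) k * poch (1/2) k) := by
        apply div_le_div_of_nonneg_left (by positivity) (by positivity)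
        exact mul_le_mul h32 hhd (le_of_lt hpk) (le_of_lt hpc1)
      refine le_trans step ?_
      rw [poch_three_halves]
      have hk2 : (0:ℝ) < 1/2 + k := by positivity
      have heq : poch (1/2) k ^ 2 / (2 * poch (1/2) k * (1/2 + (k:ℝ)) * poch (1/2) k)
          = 1 / (2 * (1/2 + (k:ℝ))) := by
        field_simp
      rw [heq]
      apply div_le_div_of_nonneg_left (by norm_num) (by positivity)
      linarith
    calc gfun m' j k = D * (poch (1/2) k ^ 2 /
          (poch ((m':ℝ) + 1 + 1/2) k * poch ((j:ℝ) + 1/2) k)) := rfl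
      _ ≤ D * (1 / ((k:ℝ)+1)) := by
          apply mul_le_mul_of_nonneg_left hcore hD0
  have hnonneg : ∀ k : ℕ, 0 ≤ gfun m' j k := by
    intro k
    have hpk := poch_pos h2 k
    have hpc1 := poch_pos hc1 k
    have hpd := poch_pos hd k
    have := poch_pos h2 (m'+1)
    have := poch_pos h2 j
    have : (0:ℝ) < ((m'+j+1).factorial : ℝ) := by positivity
    unfold gfun
    positivity
  have hlim : Filter.Tendsto (fun k : ℕ => D * (1 / ((k:ℝ)+1))) Filter.atTop (nhds 0) := by
    have := tendsto_one_div_add_atTop_nhds_zero_nat.const_mul D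
    simpa using this
  exact squeeze_zero hnonneg hbound hlim

lemma summable_t1 (m' j : ℕ) : Summable (t1 m' j) := by
  have hcore : Summable (fun k : ℕ => poch (1/2) k ^ 2 /
      (poch ((m':ℝ) + 1 + 1/2) (k+1) * poch ((j:ℝ) + 1/2) (k+1))) :=
    summable_core (by linarith [Nat.cast_nonneg (α := ℝ) m']) (by linarith [Nat.cast_nonneg (α := ℝ) j])
  refine (hcore.mul_left (poch (1/2) (m'+1) * poch (1/2) j / ((m'+j+1).factorial : ℝ))).congr
    fun k => ?_
  unfold t1
  field_simp

lemma summable_t2 (m' j : ℕ) : Summable (t2 m' j) := by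
  have hcore : Summable (fun k : ℕ => poch (1/2) k ^ 2 /
      (poch ((m':ℝ) + 1/2) (k+1) * poch ((j:ℝ) + 1/2) (k+1))) :=
    summable_core (by linarith [Nat.cast_nonneg (α := ℝ) m']) (by linarith [Nat.cast_nonneg (α := ℝ) j])
  refine (hcore.mul_left (poch (1/2) m' * poch (1/2) j / ((m'+j).factorial : ℝ))).congr
    fun k => ?_
  unfold t2
  field_simp

theorem stmt12 (n m : ℕ) (hm1 : 1 ≤ m) (hm2 : m ≤ n + 1) :
    (m : ℝ) ^ 2 * A (n + 1) m - ((m : ℝ) - 1/2) ^ 2 * A n (m - 1) =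
      -(poch (1/2) (n + 1 - m) * poch (1/2) m / (n + 1).factorial) := by
  obtain ⟨m', rfl⟩ : ∃ m', m = m' + 1 := ⟨m - 1, by omega⟩
  obtain ⟨j, rfl⟩ : ∃ j, n = m' + j := ⟨n - m', by omega⟩
  have hA1 : A (m' + j + 1) (m' + 1) = ∑' k, t1 m' j k := by
    unfold A t1
    rw [show m' + j + 1 - (m' + 1) = j from by omega]
    refine tsum_congr fun k => ?_
    push_cast
    ring_nf
  have hA2 : A (m' + j) (m' + 1 - 1) = ∑' k, t2 m' j k := by
    unfold A t2
    rw [show m' + 1 - 1 = m' from rfl, show m' + j - m' = j from by omega]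
  rw [hA1, hA2]
  have hs1 : Summable (fun k => ((m':ℝ)+1) ^ 2 * t1 m' j k) := (summable_t1 m' j).mul_left _
  have hs2 : Summable (fun k => ((m':ℝ)+1 - 1/2) ^ 2 * t2 m' j k) := (summable_t2 m' j).mul_left _
  have hcast : ((m' + 1 : ℕ) : ℝ) = (m' : ℝ) + 1 := by push_cast; ring
  rw [hcast]
  rw [← tsum_mul_left, ← tsum_mul_left, ← Summable.tsum_sub hs1 hs2]
  have htel : (∑' k, (((m':ℝ)+1) ^ 2 * t1 m' j k - ((m':ℝ)+1 - 1/2) ^ 2 * t2 m' j k))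
      = 0 - gfun m' j 0 := by
    have hsum : Summable (fun k => gfun m' j (k+1) - gfun m' j k) :=
      (hs1.sub hs2).congr (fun k => key m' j k)
    have : HasSum (fun k => gfun m' j (k+1) - gfun m' j k) (0 - gfun m' j 0) := by
      rw [hsum.hasSum_iff_tendsto_nat]
      have heq : ∀ K : ℕ, ∑ i ∈ Finset.range K, (gfun m' j (i+1) - gfun m' j i)
          = gfun m' j K - gfun m' j 0 := fun K => Finset.sum_range_sub (gfun m' j) K
      simp only [heq]
      exact (tendsto_gfun m' j).sub_const _
    rw [tsum_congr (fun k => key m' j k), this.tsum_eq]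
  rw [htel]
  have hg0 : gfun m' j 0 = poch (1/2) (m'+1) * poch (1/2) j / ((m'+j+1).factorial : ℝ) := by
    unfold gfun
    rw [poch_zero, poch_zero, poch_zero]
    ring
  rw [hg0, show m' + j + 1 - (m' + 1) = j from by omega]
  ring
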